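/- The 3-dimensional subspace of ℝ^6 consisting of vectors v with ⟨v1, v⟩ = ⟨v2, v⟩ = ⟨v3, v⟩ = 0, where v1 = (1,−1,0,1,0,0), v2 = (1,0,−1,0,1,0), v3 = (0,1,−1,0,0,1), is invariant under each of the 12 linear maps v ↦ v B^{(i)} given by the strong arbitrage matrices. -/

import Mathlib

/-- The 12 linear maps on `ℝ⁶` given by the strong arbitrage matrices `B⁽ⁱ⁾`
(in coordinates `x = (x 0, …, x 5)`, 0-indexed). -/
noncomputable def Bmaps : Fin 12 → (Fin 6 → ℝ) → (Fin 6 → ℝ) :=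
  ![fun x => Function.update x 0 (x 1 - x 3),
    fun x => Function.update x 0 (x 2 - x 4),
    fun x => Function.update x 1 (x 0 + x 3),
    fun x => Function.update x 1 (x 2 - x 5),
    fun x => Function.update x 2 (x 0 + x 4),
    fun x => Function.update x 2 (x 1 + x 5),
    fun x => Function.update x 3 (x 1 - x 0),
    fun x => Function.update x 3 (x 4 - x 5),
    fun x => Function.update x 4 (x 2 - x 0),
    fun x => Function.update x 4 (x 3 + x 5),
    fun x => Function.update x 5 (x 2 - x 1),
    fun x => Function.update x 5 (x 4 - x 3)]

/-- Dot product on `ℝ⁶`. -/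
noncomputable def dot (a b : Fin 6 → ℝ) : ℝ := ∑ i, a i * b i

def v1 : Fin 6 → ℝ := ![1, -1, 0, 1, 0, 0]
def v2 : Fin 6 → ℝ := ![1, 0, -1, 0, 1, 0]
def v3 : Fin 6 → ℝ := ![0, 1, -1, 0, 0, 1]

/-- The 3-dimensional subspace `⟨v1,v⟩ = ⟨v2,v⟩ = ⟨v3,v⟩ = 0` of `ℝ⁶` is invariant under
each of the 12 linear maps `v ↦ v B⁽ⁱ⁾` given by the strong arbitrage matrices. -/
theorem stmt6 :
    ∀ i : Fin 12, ∀ x : Fin 6 → ℝ,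
      dot v1 x = 0 → dot v2 x = 0 → dot v3 x = 0 →
      dot v1 (Bmaps i x) = 0 ∧ dot v2 (Bmaps i x) = 0 ∧ dot v3 (Bmaps i x) = 0 := by
  intro i x h1 h2 h3
  have key : ∀ (v : Fin 6 → ℝ) (j : Fin 6) (c : ℝ),
      dot v (Function.update x j c) = dot v x + v j * (c - x j) := by
    intro v j c
    have h : dot v (Function.update x j c) - dot v x = v j * (c - x j) := by
      simp only [dot, ← Finset.sum_sub_distrib]
      rw [Fintype.sum_eq_single j (fun i hi => by simp [Function.update_of_ne hi])]
      simp [mul_sub]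
    linarith
  have p10 : v1 0 = 1 := rfl
  have p11 : v1 1 = -1 := rfl
  have p12 : v1 2 = 0 := rfl
  have p13 : v1 3 = 1 := rfl
  have p14 : v1 4 = 0 := rfl
  have p15 : v1 5 = 0 := rfl
  have p20 : v2 0 = 1 := rfl
  have p21 : v2 1 = 0 := rfl
  have p22 : v2 2 = -1 := rfl
  have p23 : v2 3 = 0 := rfl
  have p24 : v2 4 = 1 := rfl
  have p25 : v2 5 = 0 := rfl
  have p30 : v3 0 = 0 := rfl
  have p31 : v3 1 = 1 := rfl
  have p32 : v3 2 = -1 := rfl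
  have p33 : v3 3 = 0 := rfl
  have p34 : v3 4 = 0 := rfl
  have p35 : v3 5 = 1 := rfl
  have e1 : (![1, -1, 0, 1, 0, 0] : Fin 6 → ℝ) 5 = 0 := rfl
  have e2 : (![1, 0, -1, 0, 1, 0] : Fin 6 → ℝ) 5 = 0 := rfl
  have e3 : (![0, 1, -1, 0, 0, 1] : Fin 6 → ℝ) 5 = 1 := rfl
  have e4 : (![1, -1, 0, 1, 0, 0] : Fin 6 → ℝ) 2 = 0 := rfl
  have e5 : (![1, -1, 0, 1, 0, 0] : Fin 6 → ℝ) 3 = 1 := rfl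
  have e6 : (![1, -1, 0, 1, 0, 0] : Fin 6 → ℝ) 4 = 0 := rfl
  have e7 : (![1, 0, -1, 0, 1, 0] : Fin 6 → ℝ) 2 = -1 := rfl
  have e8 : (![1, 0, -1, 0, 1, 0] : Fin 6 → ℝ) 3 = 0 := rfl
  have e9 : (![1, 0, -1, 0, 1, 0] : Fin 6 → ℝ) 4 = 1 := rfl
  have e10 : (![0, 1, -1, 0, 0, 1] : Fin 6 → ℝ) 2 = -1 := rfl
  have e11 : (![0, 1, -1, 0, 0, 1] : Fin 6 → ℝ) 3 = 0 := rfl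
  have e12 : (![0, 1, -1, 0, 0, 1] : Fin 6 → ℝ) 4 = 0 := rfl
  have ex1 := h1; have ex2 := h2; have ex3 := h3
  simp only [dot, Fin.sum_univ_six] at ex1 ex2 ex3
  norm_num [v1, v2, v3, e1, e2, e3, e4, e5, e6, e7, e8, e9, e10, e11, e12, Matrix.cons_val_zero, Matrix.cons_val_one, Matrix.head_cons,
    Matrix.cons_val_succ] at ex1 ex2 ex3
  fin_cases i
  · show dot v1 (Function.update x 0 (x 1 - x 3)) = 0 ∧
        dot v2 (Function.update x 0 (x 1 - x 3)) = 0 ∧ dot v3 (Function.update x 0 (x 1 - x 3)) = 0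
    simp only [key, h1, h2, h3, p10, p11, p12, p13, p14, p15, p20, p21, p22, p23, p24, p25,
      p30, p31, p32, p33, p34, p35]
    exact ⟨by linarith, by linarith, by linarith⟩
  · show dot v1 (Function.update x 0 (x 2 - x 4)) = 0 ∧
        dot v2 (Function.update x 0 (x 2 - x 4)) = 0 ∧ dot v3 (Function.update x 0 (x 2 - x 4)) = 0
    simp only [key, h1, h2, h3, p10, p11, p12, p13, p14, p15, p20, p21, p22, p23, p24, p25,
      p30, p31, p32, p33, p34, p35]
    exact ⟨by linarith, by linarith, by linarith⟩
  · show dot v1 (Function.update x 1 (x 0 + x 3)) = 0 ∧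
        dot v2 (Function.update x 1 (x 0 + x 3)) = 0 ∧ dot v3 (Function.update x 1 (x 0 + x 3)) = 0
    simp only [key, h1, h2, h3, p10, p11, p12, p13, p14, p15, p20, p21, p22, p23, p24, p25,
      p30, p31, p32, p33, p34, p35]
    exact ⟨by linarith, by linarith, by linarith⟩
  · show dot v1 (Function.update x 1 (x 2 - x 5)) = 0 ∧
        dot v2 (Function.update x 1 (x 2 - x 5)) = 0 ∧ dot v3 (Function.update x 1 (x 2 - x 5)) = 0
    simp only [key, h1, h2, h3, p10, p11, p12, p13, p14, p15, p20, p21, p22, p23, p24, p25,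
      p30, p31, p32, p33, p34, p35]
    exact ⟨by linarith, by linarith, by linarith⟩
  · show dot v1 (Function.update x 2 (x 0 + x 4)) = 0 ∧
        dot v2 (Function.update x 2 (x 0 + x 4)) = 0 ∧ dot v3 (Function.update x 2 (x 0 + x 4)) = 0
    simp only [key, h1, h2, h3, p10, p11, p12, p13, p14, p15, p20, p21, p22, p23, p24, p25,
      p30, p31, p32, p33, p34, p35]
    exact ⟨by linarith, by linarith, by linarith⟩
  · show dot v1 (Function.update x 2 (x 1 + x 5)) = 0 ∧
        dot v2 (Function.update x 2 (x 1 + x 5)) = 0 ∧ dot v3 (Function.update x 2 (x 1 + x 5)) = 0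
    simp only [key, h1, h2, h3, p10, p11, p12, p13, p14, p15, p20, p21, p22, p23, p24, p25,
      p30, p31, p32, p33, p34, p35]
    exact ⟨by linarith, by linarith, by linarith⟩
  · show dot v1 (Function.update x 3 (x 1 - x 0)) = 0 ∧
        dot v2 (Function.update x 3 (x 1 - x 0)) = 0 ∧ dot v3 (Function.update x 3 (x 1 - x 0)) = 0
    simp only [key, h1, h2, h3, p10, p11, p12, p13, p14, p15, p20, p21, p22, p23, p24, p25,
      p30, p31, p32, p33, p34, p35]
    exact ⟨by linarith, by linarith, by linarith⟩
  · show dot v1 (Function.update x 3 (x 4 - x 5)) = 0 ∧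
        dot v2 (Function.update x 3 (x 4 - x 5)) = 0 ∧ dot v3 (Function.update x 3 (x 4 - x 5)) = 0
    simp only [key, h1, h2, h3, p10, p11, p12, p13, p14, p15, p20, p21, p22, p23, p24, p25,
      p30, p31, p32, p33, p34, p35]
    exact ⟨by linarith, by linarith, by linarith⟩
  · show dot v1 (Function.update x 4 (x 2 - x 0)) = 0 ∧
        dot v2 (Function.update x 4 (x 2 - x 0)) = 0 ∧ dot v3 (Function.update x 4 (x 2 - x 0)) = 0
    simp only [key, h1, h2, h3, p10, p11, p12, p13, p14, p15, p20, p21, p22, p23, p24, p25,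
      p30, p31, p32, p33, p34, p35]
    exact ⟨by linarith, by linarith, by linarith⟩
  · show dot v1 (Function.update x 4 (x 3 + x 5)) = 0 ∧
        dot v2 (Function.update x 4 (x 3 + x 5)) = 0 ∧ dot v3 (Function.update x 4 (x 3 + x 5)) = 0
    simp only [key, h1, h2, h3, p10, p11, p12, p13, p14, p15, p20, p21, p22, p23, p24, p25,
      p30, p31, p32, p33, p34, p35]
    exact ⟨by linarith, by linarith, by linarith⟩
  · show dot v1 (Function.update x 5 (x 2 - x 1)) = 0 ∧
        dot v2 (Function.update x 5 (x 2 - x 1)) = 0 ∧ dot v3 (Function.update x 5 (x 2 - x 1)) = 0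
    simp only [key, h1, h2, h3, p10, p11, p12, p13, p14, p15, p20, p21, p22, p23, p24, p25,
      p30, p31, p32, p33, p34, p35]
    exact ⟨by linarith, by linarith, by linarith⟩
  · show dot v1 (Function.update x 5 (x 4 - x 3)) = 0 ∧
        dot v2 (Function.update x 5 (x 4 - x 3)) = 0 ∧ dot v3 (Function.update x 5 (x 4 - x 3)) = 0
    simp only [key, h1, h2, h3, p10, p11, p12, p13, p14, p15, p20, p21, p22, p23, p24, p25,
      p30, p31, p32, p33, p34, p35]
    exact ⟨by linarith, by linarith, by linarith⟩
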